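/- Let k be a complete non-archimedean field, R = k[T,T⁻¹,Z₁,Z₂,…], and R₀ the free 𝒪_k-submodule generated by ϖᵈTᵃ∏ᵢZᵢ^{eᵢ} where d = |a| if Σeᵢ = 0, d = |a| - 2·min{Σ i·eᵢ, |a|} if Σeᵢ = 1, and d = |a| - 2·Σ i·eᵢ if Σeᵢ ≥ 2. Then R₀ is a subring of R, and for each n ≥ 1: ϖ⁻ⁿZₙ ∈ R₀[T] and ϖ⁻ⁿZₙ ∈ R₀[T⁻¹] but ϖ⁻¹Zₙ ∉ R₀. -/

import Mathlib

def valuationSubring (k : Type*) [NormedField k] [IsUltrametricDist k] : Subring k where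
  carrier := {c | ‖c‖ ≤ 1}
  one_mem' := by simp
  zero_mem' := by simp
  neg_mem' := by simp
  mul_mem' := by
    intro a b ha hb
    simp only [Set.mem_setOf_eq] at *
    calc ‖a * b‖ = ‖a‖ * ‖b‖ := norm_mul a b
      _ ≤ 1 * 1 := mul_le_mul ha hb (norm_nonneg b) zero_le_one
      _ = 1 := one_mul 1
  add_mem' := by
    intro a b ha hb
    simp only [Set.mem_setOf_eq] at *
    exact le_trans (IsUltrametricDist.norm_add_le_max a b) (max_le ha hb)

private lemma Wsum_nonneg (e : ℕ+ →₀ ℕ) : 0 ≤ e.sum fun i m => (i:ℤ)*m := by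
  apply Finset.sum_nonneg; intros; positivity

private lemma Wsum_zero (e : ℕ+ →₀ ℕ) (h : e.sum (fun _ m => m) = 0) :
    (e.sum fun i m => (i:ℤ)*m) = 0 := by
  have he : e = 0 := by
    ext x
    by_contra hx
    exact hx (Finset.sum_eq_zero_iff.mp h x (Finsupp.mem_support_iff.mpr hx))
  simp [he]

private lemma d_subadd (d : ℤ → (ℕ+ →₀ ℕ) → ℤ)
    (hd : ∀ (a : ℤ) (e : ℕ+ →₀ ℕ),
      d a e = if e.sum (fun _ m => m) = 0 then |a|
        else if e.sum (fun _ m => m) = 1 then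
          |a| - 2 * min (e.sum fun i m => (i : ℤ) * m) |a|
        else |a| - 2 * e.sum fun i m => (i : ℤ) * m)
    (a b : ℤ) (e f : ℕ+ →₀ ℕ) : d (a+b) (e+f) ≤ d a e + d b f := by
  have hS : (e+f).sum (fun _ m => m) = e.sum (fun _ m => m) + f.sum (fun _ m => m) :=
    Finsupp.sum_add_index' (by simp) (by simp)
  have hW : ((e+f).sum fun i m => (i:ℤ)*m)
      = (e.sum fun i m => (i:ℤ)*m) + (f.sum fun i m => (i:ℤ)*m) :=
    Finsupp.sum_add_index' (by simp) (by intros; push_cast; ring)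
  rw [hd, hd, hd, hS, hW]
  have hWe := Wsum_nonneg e
  have hWf := Wsum_nonneg f
  have hWe0 := Wsum_zero e
  have hWf0 := Wsum_zero f
  have h1 : |a+b| ≤ |a| + |b| := abs_add_le a b
  have h2 : |a| ≤ |b| + |a+b| := by
    calc |a| = |a + b + -b| := by ring_nf
    _ ≤ |a+b| + |b| := (abs_add_le _ _).trans (by simp)
    _ = |b| + |a+b| := add_comm _ _
  have h3 : |b| ≤ |a| + |a+b| := by
    calc |b| = |a + b + -a| := by ring_nf
    _ ≤ |a+b| + |a| := (abs_add_le _ _).trans (by simp)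
    _ = |a| + |a+b| := add_comm _ _
  have hA : 0 ≤ |a| := abs_nonneg a
  have hB : 0 ≤ |b| := abs_nonneg b
  have hC : 0 ≤ |a+b| := abs_nonneg _
  generalize e.sum (fun _ m => m) = Se at *
  generalize f.sum (fun _ m => m) = Sf at *
  generalize (e.sum fun i m => (i:ℤ)*m) = We at *
  generalize (f.sum fun i m => (i:ℤ)*m) = Wf at *
  split_ifs <;> omega

private lemma d_single (d : ℤ → (ℕ+ →₀ ℕ) → ℤ)
    (hd : ∀ (a : ℤ) (e : ℕ+ →₀ ℕ),
      d a e = if e.sum (fun _ m => m) = 0 then |a|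
        else if e.sum (fun _ m => m) = 1 then
          |a| - 2 * min (e.sum fun i m => (i : ℤ) * m) |a|
        else |a| - 2 * e.sum fun i m => (i : ℤ) * m)
    (n : ℕ+) (a : ℤ) (ha : |a| = (n:ℤ)) : d a (Finsupp.single n 1) = -(n:ℤ) := by
  rw [hd]
  have h1 : (Finsupp.single n 1 : ℕ+ →₀ ℕ).sum (fun _ m => m) = 1 := by
    simp [Finsupp.sum_single_index]
  have h2 : ((Finsupp.single n 1 : ℕ+ →₀ ℕ).sum fun i m => (i:ℤ)*m) = (n:ℤ) := by
    simp [Finsupp.sum_single_index]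
  rw [h1, h2, ha]
  simp; ring

set_option maxHeartbeats 1000000 in
/-- Let `R = k[T,T⁻¹,Z₁,Z₂,…]` (modelled as the monoid algebra on
`ℤ × (ℕ+ →₀ ℕ)`) and `R₀` the free `𝒪_k`-submodule generated by `ϖᵈTᵃ∏ᵢZᵢ^{eᵢ}` where
`d = |a|` if `Σeᵢ = 0`, `d = |a| - 2·min{Σ i·eᵢ, |a|}` if `Σeᵢ = 1`, and
`d = |a| - 2·Σ i·eᵢ` if `Σeᵢ ≥ 2`. Then `R₀` is a subring of `R`, and for each `n ≥ 1`,
`ϖ⁻ⁿZₙ ∈ R₀[T]` and `ϖ⁻ⁿZₙ ∈ R₀[T⁻¹]` but `ϖ⁻¹Zₙ ∉ R₀`. -/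
theorem glueing_fails_example
    (k : Type*) [NontriviallyNormedField k] [IsUltrametricDist k] [CompleteSpace k]
    (ϖ : k) (hϖ0 : 0 < ‖ϖ‖) (hϖ1 : ‖ϖ‖ < 1)
    (d : ℤ → (ℕ+ →₀ ℕ) → ℤ)
    (hd : ∀ (a : ℤ) (e : ℕ+ →₀ ℕ),
      d a e = if e.sum (fun _ m => m) = 0 then |a|
        else if e.sum (fun _ m => m) = 1 then
          |a| - 2 * min (e.sum fun i m => (i : ℤ) * m) |a|
        else |a| - 2 * e.sum fun i m => (i : ℤ) * m)
    (R₀ : Submodule (valuationSubring k) (AddMonoidAlgebra k (ℤ × (ℕ+ →₀ ℕ))))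
    (hR₀ : R₀ = Submodule.span (valuationSubring k)
      {x : AddMonoidAlgebra k (ℤ × (ℕ+ →₀ ℕ)) | ∃ (a : ℤ) (e : ℕ+ →₀ ℕ),
        x = ϖ ^ d a e • AddMonoidAlgebra.single (a, e) (1 : k)})
    (Z : ℕ+ → AddMonoidAlgebra k (ℤ × (ℕ+ →₀ ℕ)))
    (hZ : ∀ n : ℕ+, Z n = AddMonoidAlgebra.single ((0 : ℤ), Finsupp.single n 1) (1 : k))
    (T Tinv : AddMonoidAlgebra k (ℤ × (ℕ+ →₀ ℕ)))
    (hT : T = AddMonoidAlgebra.single ((1 : ℤ), (0 : ℕ+ →₀ ℕ)) (1 : k))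
    (hTinv : Tinv = AddMonoidAlgebra.single ((-1 : ℤ), (0 : ℕ+ →₀ ℕ)) (1 : k)) :
    (1 : AddMonoidAlgebra k (ℤ × (ℕ+ →₀ ℕ))) ∈ R₀ ∧
    (∀ x ∈ R₀, ∀ y ∈ R₀, x * y ∈ R₀) ∧
    ∀ n : ℕ+,
      (ϖ⁻¹) ^ (n : ℕ) • Z n ∈ Subring.closure
        ((R₀ : Set (AddMonoidAlgebra k (ℤ × (ℕ+ →₀ ℕ)))) ∪ {T}) ∧
      (ϖ⁻¹) ^ (n : ℕ) • Z n ∈ Subring.closure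
        ((R₀ : Set (AddMonoidAlgebra k (ℤ × (ℕ+ →₀ ℕ)))) ∪ {Tinv}) ∧
      ϖ⁻¹ • Z n ∉ R₀ := by
  have hϖne : ϖ ≠ 0 := fun h => by simp [h] at hϖ0
  -- generators are in R₀
  have hgen : ∀ (a : ℤ) (e : ℕ+ →₀ ℕ),
      ϖ ^ d a e • AddMonoidAlgebra.single (a, e) (1 : k) ∈ R₀ := by
    intro a e
    rw [hR₀]
    exact Submodule.subset_span ⟨a, e, rfl⟩
  -- 1 ∈ R₀
  have hd00 : d 0 0 = 0 := by rw [hd]; simp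
  have h1mem : (1 : AddMonoidAlgebra k (ℤ × (ℕ+ →₀ ℕ))) ∈ R₀ := by
    have := hgen 0 0
    rw [hd00] at this
    have h0 : ((0:ℤ), (0 : ℕ+ →₀ ℕ)) = 0 := rfl
    simpa [AddMonoidAlgebra.one_def, h0] using this
  -- multiplicative closure
  have hmulgen : ∀ (a b : ℤ) (e f : ℕ+ →₀ ℕ),
      (ϖ ^ d a e • AddMonoidAlgebra.single (a, e) (1 : k))
        * (ϖ ^ d b f • AddMonoidAlgebra.single (b, f) (1 : k)) ∈ R₀ := by
    intro a b e f
    rw [smul_mul_assoc, mul_smul_comm, smul_smul, AddMonoidAlgebra.single_mul_single, one_mul]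
    have hsub := d_subadd d hd a b e f
    have hfac : ϖ ^ d a e * ϖ ^ d b f
        = ϖ ^ ((d a e + d b f - d (a+b) (e+f)).toNat) * ϖ ^ d (a+b) (e+f) := by
      rw [← zpow_natCast ϖ, ← zpow_add₀ hϖne, ← zpow_add₀ hϖne,
        Int.toNat_of_nonneg (by omega)]
      ring_nf
    have hnorm : ‖ϖ ^ ((d a e + d b f - d (a+b) (e+f)).toNat)‖ ≤ 1 := by
      rw [norm_pow]
      exact pow_le_one₀ (norm_nonneg _) hϖ1.le
    have heq : (ϖ ^ d a e * ϖ ^ d b f) • AddMonoidAlgebra.single ((a,e)+(b,f)) (1:k)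
        = (⟨_, hnorm⟩ : valuationSubring k)
          • (ϖ ^ d (a+b) (e+f) • AddMonoidAlgebra.single (a+b, e+f) (1:k)) := by
      rw [Subring.smul_def, smul_smul, ← hfac]; rfl
    rw [heq]
    exact Submodule.smul_mem _ _ (hgen (a+b) (e+f))
  have hmul : ∀ x ∈ R₀, ∀ y ∈ R₀, x * y ∈ R₀ := by
    rw [hR₀]
    intro x hx
    induction hx using Submodule.span_induction with
    | mem x hxs =>
      intro y hy
      induction hy using Submodule.span_induction with
      | mem y hys =>
        obtain ⟨a, e, rfl⟩ := hxs
        obtain ⟨b, f, rfl⟩ := hys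
        rw [← hR₀]
        exact hmulgen a b e f
      | zero => rw [mul_zero]; exact Submodule.zero_mem _
      | add y z _ _ hy hz => rw [mul_add]; exact Submodule.add_mem _ hy hz
      | smul c y _ hy => rw [mul_smul_comm]; exact Submodule.smul_mem _ _ hy
    | zero => intro y _; rw [zero_mul]; exact Submodule.zero_mem _
    | add x z _ _ hx hz => intro y hy; rw [add_mul]; exact Submodule.add_mem _ (hx y hy) (hz y hy)
    | smul c x _ hx => intro y hy; rw [smul_mul_assoc]; exact Submodule.smul_mem _ _ (hx y hy)
  refine ⟨h1mem, hmul, fun n => ?_⟩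
  have hdn : ∀ a : ℤ, |a| = (n:ℤ) → d a (Finsupp.single n 1) = -(n:ℤ) := d_single d hd n
  have habs1 : |(-(n:ℤ))| = (n:ℤ) := by
    rw [abs_neg]; exact abs_of_nonneg (by positivity)
  have habs2 : |((n:ℤ))| = (n:ℤ) := abs_of_nonneg (by positivity)
  constructor
  · -- ϖ⁻ⁿ Zₙ ∈ closure (R₀ ∪ {T})
    have key : (ϖ⁻¹) ^ (n:ℕ) • Z n
        = (ϖ ^ d (-(n:ℤ)) (Finsupp.single n 1)
            • AddMonoidAlgebra.single ((-(n:ℤ)), Finsupp.single n 1) (1:k)) * T ^ (n:ℕ) := by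
      rw [hdn _ habs1, hZ, hT, smul_mul_assoc, AddMonoidAlgebra.single_pow,
        AddMonoidAlgebra.single_mul_single]
      simp [zpow_neg, Prod.smul_mk, ← inv_pow]
    have hc1 : ϖ ^ d (-(n:ℤ)) (Finsupp.single n 1)
        • AddMonoidAlgebra.single ((-(n:ℤ)), Finsupp.single n 1) (1:k)
        ∈ Subring.closure ((R₀ : Set (AddMonoidAlgebra k (ℤ × (ℕ+ →₀ ℕ)))) ∪ {T}) :=
      Subring.subset_closure (Set.mem_union_left _ (hgen _ _))
    have hc2 : T ∈ Subring.closure ((R₀ : Set (AddMonoidAlgebra k (ℤ × (ℕ+ →₀ ℕ)))) ∪ {T}) :=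
      Subring.subset_closure (Set.mem_union_right _ rfl)
    rw [key]
    exact Subring.mul_mem _ hc1 (Subring.pow_mem _ hc2 _)
  constructor
  · have key : (ϖ⁻¹) ^ (n:ℕ) • Z n
        = (ϖ ^ d ((n:ℤ)) (Finsupp.single n 1)
            • AddMonoidAlgebra.single (((n:ℤ)), Finsupp.single n 1) (1:k)) * Tinv ^ (n:ℕ) := by
      rw [hdn _ habs2, hZ, hTinv, smul_mul_assoc, AddMonoidAlgebra.single_pow,
        AddMonoidAlgebra.single_mul_single]
      simp [zpow_neg, Prod.smul_mk, ← inv_pow]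
    have hc1 : ϖ ^ d ((n:ℤ)) (Finsupp.single n 1)
        • AddMonoidAlgebra.single (((n:ℤ)), Finsupp.single n 1) (1:k)
        ∈ Subring.closure ((R₀ : Set (AddMonoidAlgebra k (ℤ × (ℕ+ →₀ ℕ)))) ∪ {Tinv}) :=
      Subring.subset_closure (Set.mem_union_left _ (hgen _ _))
    have hc2 : Tinv ∈ Subring.closure ((R₀ : Set (AddMonoidAlgebra k (ℤ × (ℕ+ →₀ ℕ)))) ∪ {Tinv}) :=
      Subring.subset_closure (Set.mem_union_right _ rfl)
    rw [key]
    exact Subring.mul_mem _ hc1 (Subring.pow_mem _ hc2 _)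
  · -- ϖ⁻¹ Zₙ ∉ R₀
    intro hmem
    have hbound : ∀ x ∈ R₀, ‖x.coeff ((0:ℤ), Finsupp.single n 1)‖ ≤ 1 := by
      rw [hR₀]
      intro x hx
      induction hx using Submodule.span_induction with
      | mem x hxs =>
        obtain ⟨a, e, rfl⟩ := hxs
        rw [AddMonoidAlgebra.coeff_smul_apply, AddMonoidAlgebra.coeff_single, Finsupp.single_apply]
        split
        · next heq =>
          have ha : a = 0 := congrArg Prod.fst heq
          have he : e = Finsupp.single n 1 := congrArg Prod.snd heq
          have hd0 : d a e = 0 := by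
            rw [ha, he, hd]
            have h1 : (Finsupp.single n 1 : ℕ+ →₀ ℕ).sum (fun _ m => m) = 1 := by
              simp [Finsupp.sum_single_index]
            have h2 : ((Finsupp.single n 1 : ℕ+ →₀ ℕ).sum fun i m => (i:ℤ)*m) = (n:ℤ) := by
              simp [Finsupp.sum_single_index]
            rw [h1, h2]
            simp
          rw [hd0]
          simp
        · simp
      | zero => simp
      | add x y _ _ hx hy =>
        rw [AddMonoidAlgebra.coeff_add, Finsupp.add_apply]
        exact le_trans (IsUltrametricDist.norm_add_le_max _ _) (max_le hx hy)
      | smul c x _ hx =>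
        rw [Subring.smul_def, AddMonoidAlgebra.coeff_smul_apply, smul_eq_mul, norm_mul]
        calc ‖(c:k)‖ * ‖x.coeff ((0:ℤ), Finsupp.single n 1)‖ ≤ 1 * 1 :=
          mul_le_mul c.2 hx (norm_nonneg _) zero_le_one
        _ = 1 := one_mul 1
    have := hbound _ hmem
    rw [hZ, AddMonoidAlgebra.coeff_smul_apply, AddMonoidAlgebra.coeff_single, Finsupp.single_apply] at this
    simp only [if_pos rfl, smul_eq_mul, mul_one, if_true, eq_self_iff_true] at this
    rw [norm_inv] at this
    have h2 : (1:ℝ) < ‖ϖ‖⁻¹ := (one_lt_inv₀ hϖ0).mpr hϖ1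
    linarith
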